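/- Let m ≥ 2 be a natural number and let n ∈ ℕ be written in base m as n = Σ_{j=0}^r d_j m^j with digits d_j ∈ {0,...,m-1} and r = ⌊log_m n⌋. Then Σ_{j=0}^r d_j m^{j/2} ≤ (√m + 1)·√n. -/

import Mathlib

open Real Finset

lemma weighted_digit_sum_aux (m : ℕ) (hm : 2 ≤ m) : ∀ n : ℕ,
    ∑ j ∈ Finset.range (Nat.digits m n).length,
      ((Nat.digits m n).getD j 0 : ℝ) * Real.sqrt m ^ j
      ≤ (Real.sqrt m + 1) * (Real.sqrt ((n : ℝ) + 1) - 1) := by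
  intro n
  induction n using Nat.strong_induction_on with
  | _ n ih =>
    rcases Nat.eq_zero_or_pos n with rfl | hn
    · simp
    · have h1m : 1 < m := hm
      have hs0 : (0:ℝ) ≤ Real.sqrt m := Real.sqrt_nonneg m
      set s : ℝ := Real.sqrt m with hs
      rw [Nat.digits_def' h1m hn]
      have hqlt : n / m < n := Nat.div_lt_self hn h1m
      have IH := ih (n / m) hqlt
      rw [List.length_cons, Finset.sum_range_succ']
      simp only [List.getD_cons_succ, List.getD_cons_zero, pow_succ, pow_zero, mul_one]
      have hsum : ∑ x ∈ Finset.range (Nat.digits m (n / m)).length,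
          ((Nat.digits m (n / m)).getD x 0 : ℝ) * (s ^ x * s)
          = s * ∑ j ∈ Finset.range (Nat.digits m (n / m)).length,
              ((Nat.digits m (n / m)).getD j 0 : ℝ) * s ^ j := by
        rw [Finset.mul_sum]; congr 1; ext x; ring
      rw [hsum]
      set q := n / m with hq
      set a := n % m with ha
      have hT : s * ∑ j ∈ Finset.range (Nat.digits m q).length,
          ((Nat.digits m q).getD j 0 : ℝ) * s ^ j
          ≤ s * ((s + 1) * (Real.sqrt ((q : ℝ) + 1) - 1)) :=
        mul_le_mul_of_nonneg_left IH hs0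
      have hnmq : n = m * q + a := (Nat.div_add_mod n m).symm
      have hn_eq : (n : ℝ) = (m : ℝ) * q + a := by
        rw [hnmq]; push_cast; ring
      have haltm : a < m := Nat.mod_lt n (by omega)
      have ham : (a : ℝ) ≤ (m : ℝ) - 1 := by
        have : (a : ℝ) + 1 ≤ m := by exact_mod_cast haltm
        linarith
      set X : ℝ := Real.sqrt ((n : ℝ) + 1) with hX
      set Y : ℝ := Real.sqrt ((m : ℝ) * ((q : ℝ) + 1)) with hY
      have hYdef : Y = s * Real.sqrt ((q : ℝ) + 1) := by
        rw [hY, Real.sqrt_mul (by positivity)]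
      have hX2 : X ^ 2 = (n : ℝ) + 1 := Real.sq_sqrt (by positivity)
      have hY2 : Y ^ 2 = (m : ℝ) * ((q : ℝ) + 1) := Real.sq_sqrt (by positivity)
      have hs2 : s ^ 2 = (m : ℝ) := Real.sq_sqrt (by positivity)
      have hYX : X ≤ Y := by
        apply Real.sqrt_le_sqrt
        rw [hn_eq]; linarith
      have hX1 : 1 ≤ X := by
        nlinarith [hX2, Real.sqrt_nonneg ((n:ℝ) + 1), (by positivity : (0:ℝ) ≤ (n:ℝ))]
      have hsY : s ≤ Y := by
        rw [hs, hY]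
        apply Real.sqrt_le_sqrt
        nlinarith [(by positivity : (0:ℝ) ≤ (q:ℝ)), (by exact_mod_cast hm : (2:ℝ) ≤ (m:ℝ))]
      calc s * (∑ x ∈ Finset.range (Nat.digits m q).length,
              ((Nat.digits m q).getD x 0 : ℝ) * s ^ x) + (a : ℝ)
          ≤ s * ((s + 1) * (Real.sqrt ((q : ℝ) + 1) - 1)) + a := by
            linarith [hT]
        _ ≤ (s + 1) * (X - 1) := by
            have hkey : (Y - X) * (X + Y - s - 1) ≥ 0 :=
              mul_nonneg (by linarith) (by linarith)
            nlinarith [hkey, hX2, hY2, hs2]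

theorem weighted_digit_sum_le (m n : ℕ) (hm : 2 ≤ m) :
    ∑ j ∈ Finset.range (Nat.digits m n).length,
      ((Nat.digits m n).getD j 0 : ℝ) * Real.sqrt m ^ j
      ≤ (Real.sqrt m + 1) * Real.sqrt n := by
  have h := weighted_digit_sum_aux m hm n
  have h1 : Real.sqrt ((n : ℝ) + 1) ≤ Real.sqrt n + 1 := by
    nlinarith [Real.sq_sqrt (show (0:ℝ) ≤ (n:ℝ) + 1 by positivity),
      Real.sq_sqrt (show (0:ℝ) ≤ (n:ℝ) from Nat.cast_nonneg n),
      Real.sqrt_nonneg (n:ℝ), Real.sqrt_nonneg ((n:ℝ)+1)]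
  have hs0 : (0:ℝ) ≤ Real.sqrt m + 1 := by positivity
  calc _ ≤ (Real.sqrt m + 1) * (Real.sqrt ((n : ℝ) + 1) - 1) := h
    _ ≤ (Real.sqrt m + 1) * Real.sqrt n := by
        apply mul_le_mul_of_nonneg_left _ hs0
        linarith
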